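/- Let q = 3^k. The trinomial f(x) = x^{2q+1} + x^{3q} - x^{q+2} is a permutation polynomial of F_{q^2} if and only if k is even. -/

import Mathlib

theorem stmt_14 (k : ℕ) (hk : 0 < k) (F : Type*) [Field F] [Fintype F]
    (hF : Fintype.card F = (3 ^ k) ^ 2) :
    Function.Bijective
        (fun x : F => x ^ (2 * 3 ^ k + 1) + x ^ (3 * 3 ^ k) - x ^ (3 ^ k + 2)) ↔
      Even k := by
  -- characteristic 3
  haveI hp3 : Fact (Nat.Prime 3) := ⟨by norm_num⟩
  haveI hchar : CharP F 3 := by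
    obtain ⟨n, hp, hc⟩ := FiniteField.card F (ringChar F)
    have h1 : ringChar F ∣ 3 ^ (2 * k) := by
      rw [mul_comm 2 k, pow_mul, ← hF, hc]
      exact dvd_pow_self _ (by positivity)
    have h2 : ringChar F ∣ 3 := hp.dvd_of_dvd_pow h1
    have : ringChar F = 3 := (Nat.prime_dvd_prime_iff_eq hp (by norm_num)).mp h2
    exact this ▸ ringChar.charP F
  have h3 : (3 : F) = 0 := by exact_mod_cast CharP.cast_eq_zero F 3
  have h2ne : (2 : F) ≠ 0 := by
    intro hx
    have : (1 : F) = 0 := by linear_combination h3 - hx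
    simp at this
  -- rewrite the map in terms of the Frobenius u = x^(3^k)
  have fexp : ∀ x : F, x ^ (2 * 3 ^ k + 1) + x ^ (3 * 3 ^ k) - x ^ (3 ^ k + 2)
      = (x ^ 3 ^ k) ^ 2 * x + (x ^ 3 ^ k) ^ 3 - x ^ 3 ^ k * x ^ 2 := by
    intro x
    rw [pow_add, mul_comm 2 (3 ^ k), pow_mul, pow_one, mul_comm 3 (3 ^ k), pow_mul,
      pow_add]
  -- Frobenius is additive
  have hadd : ∀ a b : F, (a + b) ^ 3 ^ k = a ^ 3 ^ k + b ^ 3 ^ k := fun a b =>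
    add_pow_char_pow a b 3 k
  have hsub : ∀ a b : F, (a - b) ^ 3 ^ k = a ^ 3 ^ k - b ^ 3 ^ k := fun a b =>
    sub_pow_char_pow a b k
  -- x^(3^k)^(3^k) = x
  have hQQ : ∀ x : F, (x ^ 3 ^ k) ^ 3 ^ k = x := by
    intro x
    rw [← pow_mul]
    have : 3 ^ k * 3 ^ k = Fintype.card F := by rw [hF]; ring
    rw [this]
    exact FiniteField.pow_card x
  -- power of i with i^2 = -1
  have ipow : ∀ i : F, i ^ 2 = -1 → i ^ 3 ^ k = i ^ (3 ^ k % 4) := by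
    intro i hi
    have hi4 : i ^ 4 = 1 := by
      have : i ^ 4 = (i ^ 2) ^ 2 := by ring
      rw [this, hi]; ring
    conv_lhs => rw [← Nat.div_add_mod (3 ^ k) 4, pow_add, pow_mul, hi4, one_pow, one_mul]
  have hodd3k : Odd (3 ^ k) := Odd.pow (by decide)
  constructor
  · -- bijective → k even
    intro hbij
    by_contra hke
    rw [Nat.not_even_iff_odd] at hke
    obtain ⟨m, hm⟩ := hke
    have hmod : 3 ^ k % 4 = 3 := by
      subst hm
      rw [pow_add, pow_mul, pow_one, Nat.mul_mod, Nat.pow_mod]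
      norm_num
    -- get i with i^2 = -1
    have hsq : IsSquare (-1 : F) := by
      rw [FiniteField.isSquare_neg_one_iff, hF]
      rw [← pow_mul, mul_comm k 2, pow_mul, Nat.pow_mod]
      norm_num
    obtain ⟨j, hj⟩ := hsq
    set i : F := j with hidef
    have hi : i ^ 2 = -1 := by rw [pow_two, ← hj]
    have hiq : i ^ 3 ^ k = -i := by
      rw [ipow i hi, hmod, pow_succ, hi]; ring
    have hine : i ≠ 0 := by
      intro h0
      rw [h0] at hi
      simp at hi
    -- f(-1+i) = f(-1) but -1+i ≠ -1
    have hxq : (-1 + i) ^ 3 ^ k = -1 - i := by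
      rw [hadd, hiq, hodd3k.neg_one_pow]; ring
    have hyq : (-1 : F) ^ 3 ^ k = -1 := hodd3k.neg_one_pow
    have heq : ((-1 + i : F) ^ (2 * 3 ^ k + 1) + (-1 + i) ^ (3 * 3 ^ k) - (-1 + i) ^ (3 ^ k + 2))
        = ((-1 : F) ^ (2 * 3 ^ k + 1) + (-1 : F) ^ (3 * 3 ^ k) - (-1 : F) ^ (3 ^ k + 2)) := by
      rw [fexp, fexp, hxq, hyq]
      linear_combination (i - 3) * hi + (1 - 2 * i) * h3
    have := hbij.injective heq
    have : i = 0 := by linear_combination this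
    exact hine this
  · -- k even → bijective
    intro hke
    obtain ⟨m, hm⟩ := hke
    have hmod : 3 ^ k % 4 = 1 := by
      subst hm
      have : (3 : ℕ) ^ (m + m) = 9 ^ m := by rw [← two_mul, pow_mul]; norm_num
      rw [this, Nat.pow_mod]
      norm_num
    rw [← Finite.injective_iff_bijective]
    intro x y h
    simp only [fexp] at h
    set u : F := x ^ 3 ^ k with hu
    set v : F := y ^ 3 ^ k with hv
    have huq : u ^ 3 ^ k = x := hQQ x
    have hvq : v ^ 3 ^ k = y := hQQ y
    -- apply Frobenius to h
    have h2 : x ^ 2 * u + x ^ 3 - x * u ^ 2 = y ^ 2 * v + y ^ 3 - y * v ^ 2 := by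
      have := congrArg (· ^ 3 ^ k) h
      rw [hsub, hsub, hadd, hadd, mul_pow, mul_pow, mul_pow, mul_pow] at this
      rw [← pow_mul u 2, mul_comm 2 (3 ^ k), pow_mul, ← pow_mul u 3, mul_comm 3 (3 ^ k),
        pow_mul, ← pow_mul x 2, mul_comm 2 (3 ^ k), pow_mul, ← pow_mul v 2,
        mul_comm 2 (3 ^ k), pow_mul, ← pow_mul v 3, mul_comm 3 (3 ^ k), pow_mul,
        ← pow_mul y 2, mul_comm 2 (3 ^ k), pow_mul, huq, hvq] at this
      exact this
    -- the trace part: u + x = v + y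
    have ht : u + x = v + y := by
      have hA : ((u + x) - (v + y)) ^ 3 = 0 := by
        rw [show (3 : ℕ) = 3 ^ 1 by norm_num, sub_pow_char_pow, add_pow_char_pow,
          add_pow_char_pow]
        rw [show (3 : ℕ) ^ 1 = 3 by norm_num]
        linear_combination h + h2
      have := pow_eq_zero_iff (by norm_num : (3 : ℕ) ≠ 0) |>.mp hA
      exact sub_eq_zero.mp this
    -- the "imaginary" part: r^3 + r * t^2 = 0
    have hr : ((u - x) - (v - y)) ^ 3 + ((u - x) - (v - y)) * (u + x) ^ 2 = 0 := by
      linear_combination 2 * h - 2 * h2 +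
        (13 * y ^ 2 - 6 * v * y - v ^ 2 - 14 * x * y + 2 * x * v + 6 * x ^ 2 + 4 * u * y
          - 4 * u * v - 6 * u * x) * ht +
        (4 * y ^ 3 - 10 * x * y ^ 2 + 8 * x ^ 2 * y - 2 * x ^ 3 - 2 * u * y ^ 2
          + 2 * u * x ^ 2) * h3
    have key : (u - x) - (v - y) = 0 → x = y := by
      intro hr0
      have h2xy : (2 : F) * (x - y) = 0 := by linear_combination ht - hr0
      rcases mul_eq_zero.mp h2xy with h' | h'
      · exact absurd h' h2ne
      · exact sub_eq_zero.mp h'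
    have hfac : ((u - x) - (v - y)) * (((u - x) - (v - y)) ^ 2 + (u + x) ^ 2) = 0 := by
      linear_combination hr
    rcases mul_eq_zero.mp hfac with hr0 | hsum
    · exact key hr0
    · by_cases ht0 : u + x = 0
      · have hr20 : ((u - x) - (v - y)) ^ 2 = 0 := by
          linear_combination hsum - (u + x) * ht0
        exact key (pow_eq_zero_iff (by norm_num : (2 : ℕ) ≠ 0) |>.mp hr20)
      · exfalso
        have hi2 : (((u - x) - (v - y)) * (u + x)⁻¹) ^ 2 = -1 := by
          rw [mul_pow, inv_pow,
            show ((u - x) - (v - y)) ^ 2 = -(u + x) ^ 2 by linear_combination hsum,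
            neg_mul, mul_inv_cancel₀ (pow_ne_zero 2 ht0)]
        have hrq : ((u - x) - (v - y)) ^ 3 ^ k = -((u - x) - (v - y)) := by
          rw [hsub, hsub, hsub, huq, hvq]; ring
        have htq : (u + x) ^ 3 ^ k = u + x := by
          rw [hadd, huq]; ring
        have hiq : (((u - x) - (v - y)) * (u + x)⁻¹) ^ 3 ^ k
            = -(((u - x) - (v - y)) * (u + x)⁻¹) := by
          rw [mul_pow, inv_pow, hrq, htq]; ring
        have hiq' := ipow _ hi2
        rw [hmod, pow_one] at hiq'
        have h2i : (2 : F) * (((u - x) - (v - y)) * (u + x)⁻¹) = 0 := by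
          linear_combination hiq - hiq'
        rcases mul_eq_zero.mp h2i with h' | h'
        · exact h2ne h'
        · rw [h'] at hi2
          simp at hi2
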